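/- Let P, Q, P′, Q′ be points of the Euclidean plane ℝ². Set l = ‖Q − P‖, l′ = ‖Q′ − P′‖, v₁ = ‖P′ − P‖, v₂ = ‖Q′ − Q‖. Let β be the undirected angle between the vectors P′ − P and Q − P, and γ the undirected angle between the vectors Q′ − Q and P − Q (with the convention that the angle equals π/2 if one of the two vectors is zero). Assume l > 0 and v₁ + v₂ ≤ l/2. Then |l′ − l + v₁·cos β + v₂·cos γ| ≤ 10 (v₁² + v₂²)/l. -/

import Mathlib

lemma stmt4_aux (l s w t : ℝ) (hl : 0 < l) (hs : 0 ≤ s) (hw : 0 ≤ w)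
    (hwl : w ≤ l / 2) (hsq : s ^ 2 = l ^ 2 + 2 * t + w ^ 2) (ht : |t| ≤ l * w) :
    |s - l - t / l| ≤ 2 * w ^ 2 / l := by
  obtain ⟨ht1, ht2⟩ := abs_le.1 ht
  have hsl : l - w ≤ s := by nlinarith
  have hsu : s ≤ l + w := by nlinarith
  have key : |l * (s - l) - t| ≤ 2 * w ^ 2 := by
    rw [abs_le]
    constructor <;> nlinarith [sq_nonneg (s - l), sq_nonneg (s + l), mul_nonneg hw hw]
  have heq : s - l - t / l = (l * (s - l) - t) / l := by field_simp
  rw [heq, abs_div, abs_of_pos hl]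
  exact div_le_div_of_nonneg_right key hl.le |>.trans_eq rfl

lemma stmt4_cos {E : Type*} [NormedAddCommGroup E] [InnerProductSpace ℝ E]
    (a u : E) (hu : u ≠ 0) :
    ‖a‖ * Real.cos (InnerProductGeometry.angle a u) = (inner ℝ a u : ℝ) / ‖u‖ := by
  rw [InnerProductGeometry.cos_angle]
  rcases eq_or_ne a 0 with rfl | ha
  · simp
  · have h1 : ‖a‖ ≠ 0 := norm_ne_zero_iff.2 ha
    have h2 : ‖u‖ ≠ 0 := norm_ne_zero_iff.2 hu
    field_simp

lemma stmt4_main {E : Type*} [NormedAddCommGroup E] [InnerProductSpace ℝ E]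
    (u a b : E) (hl : 0 < ‖u‖) (hsmall : ‖a‖ + ‖b‖ ≤ ‖u‖ / 2) :
    |‖u + (b - a)‖ - ‖u‖
        + ‖a‖ * Real.cos (InnerProductGeometry.angle a u)
        + ‖b‖ * Real.cos (InnerProductGeometry.angle b (-u))|
      ≤ 10 * (‖a‖ ^ 2 + ‖b‖ ^ 2) / ‖u‖ := by
  have hune : u ≠ 0 := by intro h; rw [h] at hl; simp at hl
  have hcos1 := stmt4_cos a u hune
  have hcos2 : ‖b‖ * Real.cos (InnerProductGeometry.angle b (-u))
      = -(inner ℝ b u : ℝ) / ‖u‖ := by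
    rw [stmt4_cos b (-u) (neg_ne_zero.2 hune), inner_neg_right]
    simp
  have h3 : (inner ℝ u (b - a) : ℝ) = (inner ℝ b u : ℝ) - (inner ℝ a u : ℝ) := by
    rw [inner_sub_right, real_inner_comm u a, real_inner_comm u b]
  have hexpr : ‖u + (b - a)‖ - ‖u‖
      + ‖a‖ * Real.cos (InnerProductGeometry.angle a u)
      + ‖b‖ * Real.cos (InnerProductGeometry.angle b (-u))
      = ‖u + (b - a)‖ - ‖u‖ - (inner ℝ u (b - a) : ℝ) / ‖u‖ := by
    rw [hcos1, hcos2, h3]; ring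
  rw [hexpr]
  have hwab : ‖b - a‖ ≤ ‖a‖ + ‖b‖ := (norm_sub_le b a).trans_eq (by ring)
  have key := stmt4_aux ‖u‖ ‖u + (b - a)‖ ‖b - a‖ ((inner ℝ u (b - a) : ℝ)) hl
    (norm_nonneg _) (norm_nonneg _) (hwab.trans hsmall)
    (norm_add_sq_real u (b - a)) (abs_real_inner_le_norm u (b - a))
  refine key.trans ?_
  have hnum : 2 * ‖b - a‖ ^ 2 ≤ 10 * (‖a‖ ^ 2 + ‖b‖ ^ 2) := by
    nlinarith [norm_nonneg a, norm_nonneg b, sq_nonneg (‖a‖ - ‖b‖), norm_nonneg (b - a),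
      sq_nonneg (‖a‖ + ‖b‖)]
  exact div_le_div_of_nonneg_right hnum hl.le |>.trans_eq rfl

/-- Lemma 4.4 (first-order change of the length of one edge of an inscribed polygon):
with `l = ‖Q−P‖`, `l′ = ‖Q′−P′‖`, `v₁ = ‖P′−P‖`, `v₂ = ‖Q′−Q‖`, `β` the angle between
`P′−P` and `Q−P`, and `γ` the angle between `Q′−Q` and `P−Q`, if `l > 0` and
`v₁ + v₂ ≤ l/2`, then `|l′ − l + v₁ cos β + v₂ cos γ| ≤ 10(v₁² + v₂²)/l`.
(Mathlib's `InnerProductGeometry.angle` equals `π/2` when one vector vanishes.) -/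
theorem stmt4 (P Q P' Q' : EuclideanSpace ℝ (Fin 2))
    (hl : 0 < ‖Q - P‖) (hsmall : ‖P' - P‖ + ‖Q' - Q‖ ≤ ‖Q - P‖ / 2) :
    |‖Q' - P'‖ - ‖Q - P‖
        + ‖P' - P‖ * Real.cos (InnerProductGeometry.angle (P' - P) (Q - P))
        + ‖Q' - Q‖ * Real.cos (InnerProductGeometry.angle (Q' - Q) (P - Q))|
      ≤ 10 * (‖P' - P‖ ^ 2 + ‖Q' - Q‖ ^ 2) / ‖Q - P‖ := by
  have h1 : Q' - P' = (Q - P) + ((Q' - Q) - (P' - P)) := by abel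
  have h2 : P - Q = -(Q - P) := by abel
  rw [h1, h2]
  exact stmt4_main (Q - P) (P' - P) (Q' - Q) hl hsmall
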